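/- Let 0 < ε < 1, φ* ∈ (0,π/2) with φ* tan φ* = |log ε|/2, and let u be the explicit maximizer: u(s)=s on [0,ε], u(s) = (√ε/cos φ*)√s cos((1/2)cot φ* · log(s/ε) − φ*) on [ε, 1/ε], u ≡ 1 on [1/ε, ∞). Then ∫₀^∞ u'(s)² ds = ε·(2φ* + sin 2φ*)/(4 cos³φ* · sin φ*). -/

import Mathlib

open Real Set MeasureTheory

theorem maximizer_denominator (ε : ℝ) (hε0 : 0 < ε) (hε1 : ε < 1)
    (φ : ℝ) (hφ : φ ∈ Ioo 0 (π / 2)) (heq : φ * Real.tan φ = (1 / 2) * |Real.log ε|)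
    (u : ℝ → ℝ)
    (hu : u = fun s : ℝ =>
      if s ≤ ε then s
      else if s < 1 / ε then
        (Real.sqrt ε / Real.cos φ) * Real.sqrt s *
          Real.cos ((1 / 2) * (Real.cos φ / Real.sin φ) * Real.log (s / ε) - φ)
      else 1) :
    (∫ s in Ioi (0 : ℝ), (deriv u s) ^ 2)
      = ε * (2 * φ + Real.sin (2 * φ)) / (4 * Real.cos φ ^ 3 * Real.sin φ) := by
  obtain ⟨hφ0, hφπ⟩ := hφ
  have hc : 0 < Real.cos φ := Real.cos_pos_of_mem_Ioo ⟨by linarith [Real.pi_pos], hφπ⟩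
  have hsφ : 0 < Real.sin φ := Real.sin_pos_of_pos_of_lt_pi hφ0 (by linarith [Real.pi_pos])
  set c := Real.cos φ with hcdef
  set sp := Real.sin φ with hspdef
  set b := 1 / ε with hbdef
  have hb1 : (1 : ℝ) < b := one_lt_one_div hε0 hε1
  have hεb : ε < b := hε1.trans hb1
  have hb0 : (0 : ℝ) < b := by positivity
  have hlogε : Real.log ε < 0 := Real.log_neg hε0 hε1
  have hneg : -Real.log ε = 2 * φ * (sp / c) := by
    rw [abs_of_neg hlogε, Real.tan_eq_sin_div_cos] at heq
    linarith
  have hlogb : Real.log (b / ε) = 4 * φ * (sp / c) := by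
    have h1 : b / ε = (ε * ε)⁻¹ := by rw [hbdef]; field_simp
    rw [h1, Real.log_inv, Real.log_mul hε0.ne' hε0.ne']
    linear_combination 2 * hneg
  -- derivative of log (t/ε)
  have hlogD : ∀ x : ℝ, 0 < x → HasDerivAt (fun t : ℝ => Real.log (t / ε)) (1 / x) x := by
    intro x hx
    have hdiv : HasDerivAt (fun t : ℝ => t / ε) (1 / ε) x := (hasDerivAt_id x).div_const ε
    have := (Real.hasDerivAt_log (div_ne_zero hx.ne' hε0.ne')).comp x hdiv
    convert this using 1
    all_goals first | rfl | field_simp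
  -- deriv u on the three pieces
  have hd1 : ∀ s ∈ Ioo (0 : ℝ) ε, deriv u s = 1 := by
    intro s hs
    have hev : u =ᶠ[nhds s] id := by
      filter_upwards [Iio_mem_nhds hs.2] with t ht
      simp only [hu]
      rw [if_pos ht.le]
      rfl
    rw [hev.deriv_eq]
    exact deriv_id s
  have hd3 : ∀ s ∈ Ioi b, deriv u s = 0 := by
    intro s hs
    have hev : u =ᶠ[nhds s] fun _ => (1 : ℝ) := by
      filter_upwards [Ioi_mem_nhds hs] with t ht
      simp only [hu]
      rw [if_neg (not_le.mpr (hεb.trans ht)), if_neg (not_lt.mpr ht.le)]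
    rw [hev.deriv_eq]
    exact deriv_const s 1
  -- squared derivative on middle piece
  have hsq : ∀ s ∈ Ioo ε b, (deriv u s) ^ 2 =
      ε * (1 - Real.cos (4 * φ - c / sp * Real.log (s / ε))) / (8 * sp ^ 2 * c ^ 2 * s) := by
    intro s hs
    have hs0 : 0 < s := hε0.trans hs.1
    have hev : u =ᶠ[nhds s] fun t =>
        Real.sqrt ε / c * (Real.sqrt t * Real.cos (1 / 2 * (c / sp) * Real.log (t / ε) - φ)) := by
      filter_upwards [Ioo_mem_nhds hs.1 hs.2] with t ht
      simp only [hu]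
      rw [if_neg (not_le.mpr ht.1), if_pos ht.2]
      ring
    have hinner : HasDerivAt (fun t : ℝ => 1 / 2 * (c / sp) * Real.log (t / ε) - φ)
        (1 / 2 * (c / sp) * (1 / s)) s := ((hlogD s hs0).const_mul _).sub_const φ
    have hcos := (Real.hasDerivAt_cos (1 / 2 * (c / sp) * Real.log (s / ε) - φ)).comp s hinner
    have hsqrt : HasDerivAt Real.sqrt (1 / (2 * Real.sqrt s)) s := Real.hasDerivAt_sqrt hs0.ne'
    have hD := (hsqrt.mul hcos).const_mul (Real.sqrt ε / c)
    simp only [Function.comp_def, Pi.mul_apply] at hD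
    rw [hev.deriv_eq, hD.deriv]
    -- trig identity
    have hang : 4 * φ - c / sp * Real.log (s / ε)
        = 2 * (φ - (1 / 2 * (c / sp) * Real.log (s / ε) - φ)) := by ring
    have hpy := Real.sin_sq_add_cos_sq (φ - (1 / 2 * (c / sp) * Real.log (s / ε) - φ))
    have h2 : Real.cos (4 * φ - c / sp * Real.log (s / ε))
        = 1 - 2 * Real.sin (φ - (1 / 2 * (c / sp) * Real.log (s / ε) - φ)) ^ 2 := by
      rw [hang, Real.cos_two_mul]; linarith
    rw [h2, Real.sin_sub φ (1 / 2 * (c / sp) * Real.log (s / ε) - φ)]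
    set r := Real.sqrt s with hr
    have hr0 : 0 < r := Real.sqrt_pos.mpr hs0
    have hr2 : r ^ 2 = s := Real.sq_sqrt hs0.le
    set e := Real.sqrt ε with he
    have he2 : e ^ 2 = ε := Real.sq_sqrt hε0.le
    set L := Real.log (s / ε) with hL
    set CO := Real.cos (1 / 2 * (c / sp) * L - φ) with hCO
    set SI := Real.sin (1 / 2 * (c / sp) * L - φ) with hSI
    rw [← hr2, ← he2]
    field_simp
    ring
  -- antiderivative on the middle piece
  set F : ℝ → ℝ := fun t => ε / (8 * sp ^ 2 * c ^ 2) *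
      (Real.log (t / ε) + sp / c * Real.sin (4 * φ - c / sp * Real.log (t / ε))) with hFdef
  have hFder : ∀ x ∈ Icc ε b, HasDerivAt F
      (ε * (1 - Real.cos (4 * φ - c / sp * Real.log (x / ε))) / (8 * sp ^ 2 * c ^ 2 * x)) x := by
    intro x hx
    have hx0 : 0 < x := lt_of_lt_of_le hε0 hx.1
    have hin : HasDerivAt (fun t : ℝ => 4 * φ - c / sp * Real.log (t / ε))
        (-(c / sp * (1 / x))) x := ((hlogD x hx0).const_mul _).const_sub _
    have hsin := (Real.hasDerivAt_sin (4 * φ - c / sp * Real.log (x / ε))).comp x hin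
    have hall := ((hlogD x hx0).add (hsin.const_mul (sp / c))).const_mul
      (ε / (8 * sp ^ 2 * c ^ 2))
    convert hall using 1
    all_goals first | rfl | (field_simp; ring) | field_simp
  -- continuity of the middle integrand
  have hlogcont : ContinuousOn (fun s : ℝ => Real.log (s / ε)) (Icc ε b) :=
    ContinuousOn.log (by fun_prop) fun x hx =>
      div_ne_zero (lt_of_lt_of_le hε0 hx.1).ne' hε0.ne'
  have hcont : ContinuousOn (fun s : ℝ =>
      ε * (1 - Real.cos (4 * φ - c / sp * Real.log (s / ε))) / (8 * sp ^ 2 * c ^ 2 * s))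
      (Icc ε b) := by
    apply ContinuousOn.div
    · exact continuousOn_const.mul (continuousOn_const.sub
        (Real.continuous_cos.comp_continuousOn
          (continuousOn_const.sub (continuousOn_const.mul hlogcont))))
    · fun_prop
    · intro x hx
      have : 0 < x := lt_of_lt_of_le hε0 hx.1
      positivity
  -- the middle integral
  have hmid : (∫ s in Ioo ε b,
      ε * (1 - Real.cos (4 * φ - c / sp * Real.log (s / ε))) / (8 * sp ^ 2 * c ^ 2 * s))
      = F b - F ε := by
    rw [← MeasureTheory.integral_Ioc_eq_integral_Ioo, ← intervalIntegral.integral_of_le hεb.le]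
    apply intervalIntegral.integral_eq_sub_of_hasDerivAt
    · intro x hx
      exact hFder x (by rwa [uIcc_of_le hεb.le] at hx)
    · apply ContinuousOn.intervalIntegrable
      rwa [uIcc_of_le hεb.le]
  -- integrability of pieces
  have hInt1 : IntegrableOn (fun s => (deriv u s) ^ 2) (Ioc 0 ε) := by
    rw [integrableOn_Ioc_iff_integrableOn_Ioo]
    apply MeasureTheory.IntegrableOn.congr_fun (f := fun _ => (1 : ℝ))
    · exact (integrableOn_const_iff (by simp)).mpr (Or.inr (by simp [Real.volume_Ioo]))
    · intro s hs
      simp only [hd1 s hs]; norm_num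
    · exact measurableSet_Ioo
  have hInt2 : IntegrableOn (fun s => (deriv u s) ^ 2) (Ioc ε b) := by
    rw [integrableOn_Ioc_iff_integrableOn_Ioo]
    apply MeasureTheory.IntegrableOn.congr_fun
      (f := fun s : ℝ => ε * (1 - Real.cos (4 * φ - c / sp * Real.log (s / ε)))
        / (8 * sp ^ 2 * c ^ 2 * s))
    · exact (hcont.integrableOn_Icc).mono_set Ioo_subset_Icc_self
    · intro s hs
      exact (hsq s hs).symm
    · exact measurableSet_Ioo
  have hInt3 : IntegrableOn (fun s => (deriv u s) ^ 2) (Ioi b) := by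
    apply MeasureTheory.IntegrableOn.congr_fun (f := fun _ => (0 : ℝ))
    · exact (integrable_zero _ _ _).integrableOn
    · intro s hs
      simp only [hd3 s hs]; norm_num
    · exact measurableSet_Ioi
  -- piece integrals
  have hI1 : (∫ s in Ioc (0 : ℝ) ε, (deriv u s) ^ 2) = ε := by
    rw [MeasureTheory.integral_Ioc_eq_integral_Ioo,
      setIntegral_congr_fun measurableSet_Ioo
        (g := fun _ => (1 : ℝ)) (fun s hs => by rw [hd1 s hs]; norm_num)]
    rw [setIntegral_const]
    simp [Real.volume_Ioo, ENNReal.toReal_ofReal hε0.le, hε0.le]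
  have hI3 : (∫ s in Ioi b, (deriv u s) ^ 2) = 0 := by
    rw [setIntegral_congr_fun measurableSet_Ioi
      (g := fun _ => (0 : ℝ)) (fun s hs => by rw [hd3 s hs]; norm_num)]
    simp
  have hI2 : (∫ s in Ioc ε b, (deriv u s) ^ 2) = F b - F ε := by
    rw [MeasureTheory.integral_Ioc_eq_integral_Ioo,
      setIntegral_congr_fun measurableSet_Ioo
        (g := fun s : ℝ => ε * (1 - Real.cos (4 * φ - c / sp * Real.log (s / ε)))
          / (8 * sp ^ 2 * c ^ 2 * s)) (fun s hs => hsq s hs)]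
    exact hmid
  -- split the integral
  have hunion : Ioi (0 : ℝ) = Ioc 0 ε ∪ (Ioc ε b ∪ Ioi b) := by
    rw [Ioc_union_Ioi_eq_Ioi hεb.le, Ioc_union_Ioi_eq_Ioi hε0.le]
  have hdis2 : Disjoint (Ioc ε b) (Ioi b) := by
    apply Set.disjoint_left.mpr
    rintro x ⟨_, hx2⟩ hx3
    exact absurd hx3 (not_lt.mpr hx2)
  have hdis1 : Disjoint (Ioc (0 : ℝ) ε) (Ioc ε b ∪ Ioi b) := by
    apply Set.disjoint_left.mpr
    rintro x ⟨_, hx2⟩ (⟨hx3, _⟩ | hx3)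
    · exact absurd hx3 (not_lt.mpr hx2)
    · exact absurd (hεb.trans hx3) (not_lt.mpr hx2)
  rw [hunion, setIntegral_union hdis1 (measurableSet_Ioc.union measurableSet_Ioi) hInt1
      (hInt2.union hInt3),
    setIntegral_union hdis2 measurableSet_Ioi hInt2 hInt3, hI1, hI2, hI3]
  -- evaluate F b - F ε and finish
  have hFb : F b = ε / (8 * sp ^ 2 * c ^ 2) * (4 * φ * (sp / c)) := by
    rw [hFdef]
    simp only
    rw [hlogb]
    have : c / sp * (4 * φ * (sp / c)) = 4 * φ := by field_simp
    rw [this]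
    simp
  have hFε : F ε = ε / (8 * sp ^ 2 * c ^ 2) * (sp / c * Real.sin (4 * φ)) := by
    rw [hFdef]
    simp only
    rw [div_self hε0.ne', Real.log_one]
    ring_nf
  rw [hFb, hFε]
  have hsin4 : Real.sin (4 * φ) = 2 * Real.sin (2 * φ) * Real.cos (2 * φ) := by
    rw [show (4 : ℝ) * φ = 2 * (2 * φ) by ring, Real.sin_two_mul]
  have hsin2 : Real.sin (2 * φ) = 2 * sp * c := by
    rw [Real.sin_two_mul]
  have hcos2 : Real.cos (2 * φ) = 2 * c ^ 2 - 1 := by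
    rw [Real.cos_two_mul]
  rw [hsin4, hsin2, hcos2]
  field_simp
  ring
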